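/- Let A be a fixed infinite set of atoms and let S_A denote the group of finitary permutations of A (bijections generated by finitely many transpositions), acting on A naturally. A bijection f : A → A is finitely supported (with respect to the conjugation action π·f = π∘f∘π⁻¹) if and only if f is a finitary permutation of A. -/

import Mathlib

open Pointwise

/-- The group of finitary permutations of the set `A` of atoms:
bijections of `A` that move only finitely many atoms. -/
def finPerm (A : Type*) : Subgroup (Equiv.Perm A) where
  carrier := {π | {a | π a ≠ a}.Finite}
  one_mem' := by simp
  mul_mem' := by
    intro π σ hπ hσ
    apply Set.Finite.subset (hπ.union hσ)
    intro a ha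
    by_contra hc
    simp only [Set.mem_union, Set.mem_setOf_eq, not_or, not_not] at hc
    exact ha (by simp [Equiv.Perm.mul_apply, hc.1, hc.2])
  inv_mem' := by
    intro π hπ
    apply Set.Finite.subset hπ
    intro a ha
    simp only [Set.mem_setOf_eq] at ha ⊢
    intro h
    exact ha (Equiv.Perm.inv_eq_iff_eq.mpr h.symm)

/-- `x` is finitely supported: some finite set of atoms supports it. -/
def FinitelySupported (A : Type*) {X : Type*} [MulAction (finPerm A) X] (x : X) : Prop :=
  ∃ S : Set A, S.Finite ∧ MulAction.Supports (finPerm A) S x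

/-- A subset `Z` of an `S_A`-set is uniformly supported if a single finite set
of atoms supports every element of `Z`. -/
def UniformlySupported (A : Type*) {X : Type*} [MulAction (finPerm A) X] (Z : Set X) : Prop :=
  ∃ S : Set A, S.Finite ∧ ∀ x ∈ Z, MulAction.Supports (finPerm A) S x

/-- The least support of `x`: the intersection of all finite sets of atoms supporting `x`. -/
noncomputable def supp (A : Type*) {X : Type*} [MulAction (finPerm A) X] (x : X) : Set A :=
  ⋂₀ {S : Set A | S.Finite ∧ MulAction.Supports (finPerm A) S x}

/-- `Z` contains no infinite uniformly supported subset
(`Z` is "FSM non-uniformly infinite"). -/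
def NoInfUS (A : Type*) {X : Type*} [MulAction (finPerm A) X] (Z : Set X) : Prop :=
  ∀ W ⊆ Z, UniformlySupported A W → W.Finite

/-- The uniform powerset `℘_us(X)`: all uniformly supported subsets of `X`. -/
def usPowerset (A : Type*) {X : Type*} [MulAction (finPerm A) X] (Z : Set X) : Set (Set X) :=
  {W | W ⊆ Z ∧ UniformlySupported A W}

/-- The finite powerset `℘_fin(X)`: all finite subsets of `X`. -/
def finPowerset {X : Type*} (Z : Set X) : Set (Set X) :=
  {W | W ⊆ Z ∧ W.Finite}

/-- `S` supports the function `f` on the domain `X` (Proposition 2.18'(2)):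
for every `π` fixing `S` pointwise and every `x ∈ X`, `π • x ∈ X` and
`f (π • x) = π • f x`. -/
def FnSupportsOn (A : Type*) {Y : Type*} [MulAction (finPerm A) Y]
    (X : Set Y) (S : Set A) (f : Y → Y) : Prop :=
  ∀ π : finPerm A, (∀ a ∈ S, π • a = a) → ∀ x ∈ X, π • x ∈ X ∧ f (π • x) = π • f x

/-- The least support of a function `f` with domain `X`. -/
noncomputable def fnSupp (A : Type*) {Y : Type*} [MulAction (finPerm A) Y]
    (X : Set Y) (f : Y → Y) : Set A :=
  ⋂₀ {S : Set A | S.Finite ∧ FnSupportsOn A X S f}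


/-- A bijection `f : A → A` is finitely supported with respect to the
conjugation action `π • f = π ∘ f ∘ π⁻¹` if and only if `f` is a finitary permutation. -/
theorem stmt0 {A : Type*} [Infinite A] (f : Equiv.Perm A) :
    (∃ S : Set A, S.Finite ∧ ∀ π : finPerm A, (∀ a ∈ S, π • a = a) →
        (π : Equiv.Perm A) * f * (π : Equiv.Perm A)⁻¹ = f) ↔ f ∈ finPerm A := by
  classical
  constructor
  · rintro ⟨S, hSfin, hsupp⟩
    by_contra hf
    have hinf : {a | f a ≠ a}.Infinite := fun h => hf h
    obtain ⟨a, ha⟩ := (hinf.diff hSfin).nonempty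
    obtain ⟨hafa, haS⟩ : f a ≠ a ∧ a ∉ S := ⟨ha.1, ha.2⟩
    obtain ⟨b, hb⟩ := ((hSfin.union ((Set.finite_singleton a).union
      (Set.finite_singleton (f a)))).infinite_compl).nonempty
    simp only [Set.mem_compl_iff, Set.mem_union, Set.mem_singleton_iff, not_or] at hb
    obtain ⟨hbS, hba, hbfa⟩ := hb
    have hmem : Equiv.swap a b ∈ finPerm A := by
      apply Set.Finite.subset ((Set.finite_singleton b).insert a)
      intro x hx
      simp only [Set.mem_setOf_eq] at hx
      by_contra hc
      simp only [Set.mem_insert_iff, Set.mem_singleton_iff, not_or] at hc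
      exact hx (Equiv.swap_apply_of_ne_of_ne hc.1 hc.2)
    have hfix : ∀ c ∈ S, (⟨Equiv.swap a b, hmem⟩ : finPerm A) • c = c := by
      intro c hc
      have h1 : c ≠ a := fun h => haS (h ▸ hc)
      have h2 : c ≠ b := fun h => hbS (h ▸ hc)
      show Equiv.swap a b c = c
      exact Equiv.swap_apply_of_ne_of_ne h1 h2
    have key := hsupp ⟨Equiv.swap a b, hmem⟩ hfix
    have := congrArg (fun g : Equiv.Perm A => g a) key
    simp only [Equiv.Perm.mul_apply, (fun g x => g.symm_apply_apply x : ∀ (g : Equiv.Perm A) x, g⁻¹ (g x) = x)] at this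
    -- this : swap a b (f (swap⁻¹ a)) = f a
    have h1 : (Equiv.swap a b)⁻¹ a = b := by simp [Equiv.swap_apply_left]
    rw [h1] at this
    have h2 : Equiv.swap a b (f b) = f a := this
    have h3 : f b = (Equiv.swap a b)⁻¹ (f a) := by
      rw [← h2]; simp
    have h4 : f b = f a := by
      rw [h3]
      simp only [Equiv.swap_inv]
      exact Equiv.swap_apply_of_ne_of_ne hafa (Ne.symm hbfa)
    exact hba (f.injective h4)
  · intro hf
    refine ⟨{a | f a ≠ a}, hf, ?_⟩
    intro π hπ
    have hfixS : ∀ c, f c ≠ c → (π : Equiv.Perm A) c = c := fun c hc => hπ c hc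
    ext x
    simp only [Equiv.Perm.mul_apply]
    by_cases hx : f ((π : Equiv.Perm A)⁻¹ x) = (π : Equiv.Perm A)⁻¹ x
    · rw [hx]
      simp only [Equiv.Perm.coe_inv, Equiv.apply_symm_apply]
      by_cases hfx : f x = x
      · exact hfx.symm
      · exfalso
        have := hfixS x hfx
        apply hfx
        rw [← this] at hx
        simpa using hx
    · -- π⁻¹ x is moved by f, so π fixes it, so π⁻¹ x = x
      have h1 : (π : Equiv.Perm A) ((π : Equiv.Perm A)⁻¹ x) = (π : Equiv.Perm A)⁻¹ x :=
        hfixS _ hx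
      have h2 : (π : Equiv.Perm A)⁻¹ x = x := by
        conv_rhs => rw [← (show (π : Equiv.Perm A) ((π : Equiv.Perm A)⁻¹ x) = x from Equiv.apply_symm_apply _ x)]
        rw [h1]
      rw [h2]
      have h3 : f x ≠ x := h2 ▸ hx
      -- f x is also moved or equals: show f (f x) ≠ f x to get π fixes f x
      have h4 : f (f x) ≠ f x := fun h => h3 (f.injective h)
      exact hfixS (f x) h4
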